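/- For every x ∈ ℝ^d, writing S = S(x) and y = x − (S/d)·𝟙 (so that ⟨y, 𝟙⟩ = 0), one has the identity ⟨x − x*, B(x) − D(x)⟩ = −(κ/d)·S·(S − S*)² − (μ + κ·S)·‖y‖². -/

import Mathlib

open scoped BigOperators RealInnerProductSpace

noncomputable section

namespace LVExample

variable {d : ℕ}

/-- `S(x) = Σ_j x_j`. -/
def Svec (x : EuclideanSpace ℝ (Fin d)) : ℝ := ∑ j, x j

/-- The birth vector field `B_j(x) = λ·S(x)`. -/
def Bvec (lam : ℝ) (x : EuclideanSpace ℝ (Fin d)) : EuclideanSpace ℝ (Fin d) :=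
  WithLp.toLp 2 (fun _ => lam * Svec x)

/-- The death vector field `D_j(x) = x_j·(μ + κ·S(x))`. -/
def Dvec (mu kappa : ℝ) (x : EuclideanSpace ℝ (Fin d)) : EuclideanSpace ℝ (Fin d) :=
  WithLp.toLp 2 (fun j => x j * (mu + kappa * Svec x))

/-- The all-ones vector `𝟙 ∈ ℝ^d`. -/
def ones (d : ℕ) : EuclideanSpace ℝ (Fin d) := WithLp.toLp 2 (fun _ => 1)

/-- The fixed point `x*` with `x*_j = S*/d` where `S* = (λ·d − μ)/κ`. -/
def xstar (d : ℕ) (lam mu kappa : ℝ) : EuclideanSpace ℝ (Fin d) :=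
  WithLp.toLp 2 (fun _ => ((lam * d - mu) / kappa) / d)

end LVExample

open LVExample

/-- for every `x ∈ ℝ^d`, writing `S = S(x)` and `y = x − (S/d)·𝟙`, one has
`⟨x − x*, B(x) − D(x)⟩ = −(κ/d)·S·(S − S*)² − (μ + κ·S)·‖y‖²`. -/
theorem lv_inner_identity (d : ℕ) (hd : 1 ≤ d) (lam mu kappa : ℝ)
    (hkappa : 0 < kappa) (hmu : 0 < mu / d) (hlam : mu / d < lam) :
    ∀ x : EuclideanSpace ℝ (Fin d),
      ⟪x - xstar d lam mu kappa, Bvec lam x - Dvec mu kappa x⟫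
        = -(kappa / d) * Svec x * (Svec x - (lam * d - mu) / kappa) ^ 2
          - (mu + kappa * Svec x) * ‖x - (Svec x / d) • ones d‖ ^ 2 := by
  intro x
  have hd0 : (d : ℝ) ≠ 0 := by positivity
  have hk0 : kappa ≠ 0 := ne_of_gt hkappa
  set S : ℝ := Svec x with hS
  set Q : ℝ := ∑ j, (x j) ^ 2 with hQ
  have key : ∀ c a b : ℝ, (∑ j, (x j - c) * (a - x j * b))
      = a * S - b * Q - c * (a * d - b * S) := by
    intro c a b
    have h : ∀ j : Fin d, (x j - c) * (a - x j * b)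
        = (a + c * b) * x j - b * (x j) ^ 2 - c * a := fun j => by ring
    simp only [h]
    rw [Finset.sum_sub_distrib, Finset.sum_sub_distrib, ← Finset.mul_sum,
      ← Finset.mul_sum, Finset.sum_const, Finset.card_fin, nsmul_eq_mul]
    have e1 : (∑ i : Fin d, x i) = S := rfl
    have e2 : (∑ i : Fin d, (x i) ^ 2) = Q := rfl
    rw [e1, e2]; ring
  have hnorm : ‖x - (S / d) • ones d‖ ^ 2 = Q - S ^ 2 / d := by
    rw [← real_inner_self_eq_norm_sq]
    simp only [PiLp.inner_apply, RCLike.inner_apply, conj_trivial, PiLp.sub_apply,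
      PiLp.smul_apply, ones, smul_eq_mul, mul_one]
    have h : ∀ j : Fin d, (x j - S / d) * (x j - S / d)
        = (x j) ^ 2 - (2 * (S / d)) * x j + (S / d) ^ 2 := fun j => by ring
    simp only [h]
    rw [Finset.sum_add_distrib, Finset.sum_sub_distrib, ← Finset.mul_sum,
      Finset.sum_const, Finset.card_fin, nsmul_eq_mul]
    have e1 : (∑ i : Fin d, x i) = S := rfl
    have e2 : (∑ i : Fin d, (x i) ^ 2) = Q := rfl
    rw [e1, e2]
    field_simp
    ring
  have hinner : ⟪x - xstar d lam mu kappa, Bvec lam x - Dvec mu kappa x⟫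
      = lam * S * S - (mu + kappa * S) * Q
        - (((lam * d - mu) / kappa) / d) * (lam * S * d - (mu + kappa * S) * S) := by
    simp only [PiLp.inner_apply, RCLike.inner_apply, conj_trivial, PiLp.sub_apply,
      Bvec, Dvec, xstar, ← hS]
    rw [← key]
    exact Finset.sum_congr rfl fun j _ => mul_comm _ _
  rw [hinner, hnorm]
  field_simp
  ring
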